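/- For every positive integers m, n, k there is a bijection between the set of k-colourings of nK_m and the set of (n,m)-labelled Eulerian digraphs on k vertices; consequently the total number of colourings of nK_m equals the total number of (n,m)-labelled Eulerian digraphs (counted up to the appropriate isomorphism of labelled structures). -/

import Mathlib

open Finset

/-- The disjoint union of `n` copies of the complete graph `K_m`, on vertex set `Fin n × Fin m`. -/
def cliqueUnion (n m : ℕ) : SimpleGraph (Fin n × Fin m) where
  Adj x y := x.1 = y.1 ∧ x.2 ≠ y.2
  symm := ⟨fun _ _ h => ⟨h.1.symm, h.2.symm⟩⟩
  loopless := ⟨fun _ h => h.2 rfl⟩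

/-- A finpartition of the vertex set is a colouring when every part is a stable set. -/
def IsColouring {V : Type*} [Fintype V] [DecidableEq V] (G : SimpleGraph V)
    (P : Finpartition (univ : Finset V)) : Prop :=
  ∀ p ∈ P.parts, ∀ x ∈ p, ∀ y ∈ p, ¬ G.Adj x y

/-- The number of `k`-colourings of `G` (partitions into exactly `k` nonempty stable sets). -/
noncomputable def numColourings {V : Type*} [Fintype V] [DecidableEq V] (G : SimpleGraph V) (k : ℕ) : ℕ :=
  Nat.card {P : Finpartition (univ : Finset V) // P.parts.card = k ∧ IsColouring G P}

/-- The total number of colourings of `G`. -/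
noncomputable def totalColourings {V : Type*} [Fintype V] [DecidableEq V] (G : SimpleGraph V) : ℕ :=
  Nat.card {P : Finpartition (univ : Finset V) // IsColouring G P}

/-- A representative of an `(n,m)`-labelled Eulerian digraph on `k` vertices: the map sending
the `j`-th edge `e_{i,j}` of the `i`-th directed `m`-cycle to its starting vertex.  (The edge
`e_{i,j}` ends at the start of `e_{i,j+1}`, indices mod `m`; the in-degree/out-degree condition
is automatic.)  Every vertex is used, and each `m`-cycle visits `m` distinct vertices. -/
def LEDRep (n m k : ℕ) :=
  {s : Fin n × Fin m → Fin k // Function.Surjective s ∧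
    ∀ i : Fin n, Function.Injective fun j : Fin m => s (i, j)}

/-- Two representatives give the same labelled digraph when they differ by a relabelling of
the `k` vertices. -/
def ledSetoid (n m k : ℕ) : Setoid (LEDRep n m k) where
  r s t := ∃ π : Equiv.Perm (Fin k), ∀ x, π (s.1 x) = t.1 x
  iseqv := by
    refine ⟨fun s => ⟨Equiv.refl _, fun _ => rfl⟩, ?_, ?_⟩
    · rintro s t ⟨π, h⟩
      exact ⟨π.symm, fun x => by rw [← h x, Equiv.symm_apply_apply]⟩
    · rintro s t u ⟨π, h⟩ ⟨σ, h'⟩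
      exact ⟨π.trans σ, fun x => by rw [Equiv.trans_apply, h x, h' x]⟩

/-- `(n,m)`-labelled Eulerian digraphs on `k` vertices, up to isomorphism of labelled
structures. -/
def LED (n m k : ℕ) := Quotient (ledSetoid n m k)


section Aux

variable {α : Type*} [Fintype α] [DecidableEq α] {k : ℕ}

/-- The partition of `univ` into the fibers of a surjective map `s : α → Fin k`. -/
def fiberPartition (s : α → Fin k) (hs : Function.Surjective s) :
    Finpartition (univ : Finset α) where
  parts := (univ : Finset (Fin k)).image fun c => univ.filter fun x => s x = c
  supIndep := by
    rw [Finset.supIndep_iff_pairwiseDisjoint]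
    rintro t ht u hu htu
    simp only [coe_image, Set.mem_image, mem_coe, mem_univ, coe_univ, Set.image_univ,
      Set.mem_range] at ht hu
    obtain ⟨c, rfl⟩ := ht
    obtain ⟨d, rfl⟩ := hu
    have hcd : c ≠ d := fun h => htu (by rw [h])
    simp only [Function.onFun, id]
    rw [Finset.disjoint_left]
    intro x hx hx'
    simp only [mem_filter] at hx hx'
    exact hcd (hx.2 ▸ hx'.2 ▸ rfl)
  sup_parts := by
    apply le_antisymm
    · exact Finset.sup_le fun t ht => le_top.trans_eq rfl
    · intro x _
      rw [Finset.mem_sup]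
      exact ⟨univ.filter fun y => s y = s x, mem_image_of_mem _ (mem_univ _),
        mem_filter.2 ⟨mem_univ _, rfl⟩⟩
  bot_notMem := by
    simp only [bot_eq_empty, mem_image, mem_univ, true_and]
    rintro ⟨c, hc⟩
    obtain ⟨x, hx⟩ := hs c
    have : x ∈ univ.filter fun y => s y = c := mem_filter.2 ⟨mem_univ _, hx⟩
    rw [hc] at this
    exact notMem_empty _ this

lemma fiberPartition_parts_card (s : α → Fin k) (hs : Function.Surjective s) :
    (fiberPartition s hs).parts.card = k := by
  rw [fiberPartition]
  rw [Finset.card_image_of_injective _ ?_, card_univ, Fintype.card_fin]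
  intro c d h
  obtain ⟨x, hx⟩ := hs c
  have h1 : x ∈ univ.filter fun y => s y = c := mem_filter.2 ⟨mem_univ _, hx⟩
  rw [show (univ.filter fun y => s y = c) = univ.filter fun y => s y = d from h] at h1
  exact hx ▸ (mem_filter.1 h1).2

lemma mem_parts_fiberPartition {s : α → Fin k} {hs : Function.Surjective s} {t : Finset α} :
    t ∈ (fiberPartition s hs).parts ↔ ∃ c, t = univ.filter fun x => s x = c := by
  simp [fiberPartition, eq_comm]

end Aux

section Key

variable {α : Type*} [Fintype α] [DecidableEq α] {k : ℕ}

lemma key_part_eq {s t : α → Fin k} (hs : Function.Surjective s) (ht : Function.Surjective t)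
    (hparts : (fiberPartition s hs).parts = (fiberPartition t ht).parts)
    {x y : α} (h : s x = s y) : t x = t y := by
  have hx : (univ.filter fun z => s z = s x) ∈ (fiberPartition t ht).parts := by
    rw [← hparts]; exact mem_parts_fiberPartition.2 ⟨s x, rfl⟩
  have hxt : (univ.filter fun z => t z = t x) ∈ (fiberPartition t ht).parts :=
    mem_parts_fiberPartition.2 ⟨t x, rfl⟩
  have heq := Finpartition.eq_of_mem_parts _ hx hxt (mem_filter.2 ⟨mem_univ _, rfl⟩)
    (mem_filter.2 ⟨mem_univ _, rfl⟩)
  have hy : y ∈ univ.filter fun z => s z = s x := mem_filter.2 ⟨mem_univ _, h.symm⟩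
  rw [heq] at hy
  exact ((mem_filter.1 hy).2).symm

end Key

variable {n m k : ℕ}

/-- The colouring associated to an LED representative. -/
noncomputable def ledRepToCol (s : LEDRep n m k) :
    {P : Finpartition (univ : Finset (Fin n × Fin m)) //
      P.parts.card = k ∧ IsColouring (cliqueUnion n m) P} := by
  refine ⟨fiberPartition s.1 s.2.1, fiberPartition_parts_card _ _, ?_⟩
  intro p hp x hx y hy hadj
  obtain ⟨c, rfl⟩ := mem_parts_fiberPartition.1 hp
  have hx' := (mem_filter.1 hx).2
  have hy' := (mem_filter.1 hy).2
  obtain ⟨hadj1, hadj2⟩ := hadj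
  have hx2 : x = (x.1, x.2) := rfl
  have hy2 : y = (x.1, y.2) := by rw [hadj1]
  have : s.1 (x.1, x.2) = s.1 (x.1, y.2) := by
    rw [← hx2, ← hy2, hx', hy']
  exact hadj2 (s.2.2 x.1 this)

lemma ledRepToCol_respects (s t : LEDRep n m k) (h : (ledSetoid n m k).r s t) :
    ledRepToCol s = ledRepToCol t := by
  obtain ⟨π, hπ⟩ := h
  apply Subtype.ext
  apply Finpartition.ext
  ext u
  rw [show (ledRepToCol s).1.parts = (fiberPartition s.1 s.2.1).parts from rfl,
    show (ledRepToCol t).1.parts = (fiberPartition t.1 t.2.1).parts from rfl]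
  rw [mem_parts_fiberPartition, mem_parts_fiberPartition]
  constructor
  · rintro ⟨c, rfl⟩
    refine ⟨π c, ?_⟩
    ext x
    simp only [mem_filter, mem_univ, true_and]
    rw [← hπ x]
    exact ⟨fun h => h ▸ rfl, fun h => π.injective h⟩
  · rintro ⟨c, rfl⟩
    refine ⟨π.symm c, ?_⟩
    ext x
    simp only [mem_filter, mem_univ, true_and]
    rw [← hπ x]
    constructor
    · intro h; rw [← h, Equiv.symm_apply_apply]
    · intro h; rw [h, Equiv.apply_symm_apply]

/-- The colouring associated to an LED. -/
noncomputable def ledToCol : LED n m k →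
    {P : Finpartition (univ : Finset (Fin n × Fin m)) //
      P.parts.card = k ∧ IsColouring (cliqueUnion n m) P} :=
  Quotient.lift ledRepToCol ledRepToCol_respects

lemma ledToCol_injective : Function.Injective (ledToCol (n := n) (m := m) (k := k)) := by
  intro a b
  refine Quotient.inductionOn₂ a b ?_
  intro s t h
  have hparts : (fiberPartition s.1 s.2.1).parts = (fiberPartition t.1 t.2.1).parts := by
    have := congrArg (fun x => x.1.parts) h
    exact this
  have hst : ∀ x y, s.1 x = s.1 y → t.1 x = t.1 y := fun x y hxy =>
    key_part_eq s.2.1 t.2.1 hparts hxy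
  have hts : ∀ x y, t.1 x = t.1 y → s.1 x = s.1 y := fun x y hxy =>
    key_part_eq t.2.1 s.2.1 hparts.symm hxy
  set f : Fin k → Fin k := fun c => t.1 (Function.surjInv s.2.1 c) with hf
  have hfs : ∀ x, f (s.1 x) = t.1 x := fun x =>
    hst _ _ (Function.surjInv_eq s.2.1 (s.1 x))
  have hinj : Function.Injective f := by
    intro c d hcd
    rw [← Function.surjInv_eq s.2.1 c, ← Function.surjInv_eq s.2.1 d]
    exact hts _ _ hcd
  have hsurj : Function.Surjective f := by
    intro d
    obtain ⟨x, hx⟩ := t.2.1 d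
    exact ⟨s.1 x, (hfs x).trans hx⟩
  exact Quotient.sound ⟨Equiv.ofBijective f ⟨hinj, hsurj⟩, hfs⟩

lemma ledToCol_surjective : Function.Surjective (ledToCol (n := n) (m := m) (k := k)) := by
  rintro ⟨P, hcard, hcol⟩
  have e : {p // p ∈ P.parts} ≃ Fin k :=
    Fintype.equivFinOfCardEq (by rw [Fintype.card_coe, hcard])
  set s : Fin n × Fin m → Fin k := fun x => e ⟨P.part x, P.part_mem.2 (mem_univ x)⟩ with hsdef
  have hfilter : ∀ c, (univ.filter fun x => s x = c) = (e.symm c).1 := by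
    intro c
    ext x
    simp only [mem_filter, mem_univ, true_and]
    constructor
    · intro h
      have : (⟨P.part x, P.part_mem.2 (mem_univ x)⟩ : {p // p ∈ P.parts}) = e.symm c := by
        rw [← h]; exact (e.symm_apply_apply _).symm
      have hpx : P.part x = (e.symm c).1 := congrArg Subtype.val this
      rw [← hpx]
      exact P.mem_part (mem_univ x)
    · intro h
      have hpx : P.part x = (e.symm c).1 := P.part_eq_of_mem (e.symm c).2 h
      have : (⟨P.part x, P.part_mem.2 (mem_univ x)⟩ : {p // p ∈ P.parts}) = e.symm c :=
        Subtype.ext hpx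
      rw [hsdef]
      simp only
      rw [this, Equiv.apply_symm_apply]
  have hsurj : Function.Surjective s := by
    intro c
    obtain ⟨x, hx⟩ := P.nonempty_of_mem_parts (e.symm c).2
    refine ⟨x, ?_⟩
    have : x ∈ univ.filter fun y => s y = c := by rw [hfilter]; exact hx
    exact (mem_filter.1 this).2
  have hinjc : ∀ i : Fin n, Function.Injective fun j : Fin m => s (i, j) := by
    intro i j j' hjj'
    by_contra hne
    have h1 : (⟨P.part (i, j), P.part_mem.2 (mem_univ _)⟩ : {p // p ∈ P.parts}) =
        ⟨P.part (i, j'), P.part_mem.2 (mem_univ _)⟩ := e.injective hjj'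
    have h2 : P.part (i, j) = P.part (i, j') := congrArg Subtype.val h1
    have hmem : (i, j') ∈ P.part (i, j) := h2 ▸ P.mem_part (mem_univ _)
    exact hcol _ (P.part_mem.2 (mem_univ (i, j))) _ (P.mem_part (mem_univ _)) _ hmem
      ⟨rfl, hne⟩
  refine ⟨Quotient.mk _ ⟨s, hsurj, hinjc⟩, ?_⟩
  apply Subtype.ext
  apply Finpartition.ext
  show (fiberPartition s hsurj).parts = P.parts
  ext t
  rw [mem_parts_fiberPartition]
  constructor
  · rintro ⟨c, rfl⟩
    rw [hfilter]
    exact (e.symm c).2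
  · intro ht
    refine ⟨e ⟨t, ht⟩, ?_⟩
    rw [hfilter, Equiv.symm_apply_apply]

theorem colourings_equiv_labelled_eulerian_digraphs (m n : ℕ) (hm : 1 ≤ m) (hn : 1 ≤ n) :
    (∀ k, 1 ≤ k →
      Nonempty ({P : Finpartition (univ : Finset (Fin n × Fin m)) //
          P.parts.card = k ∧ IsColouring (cliqueUnion n m) P} ≃ LED n m k)) ∧
    totalColourings (cliqueUnion n m) = ∑ k ∈ Finset.Icc 1 (n * m), Nat.card (LED n m k) := by
  classical
  have hequiv : ∀ k : ℕ, Nonempty ({P : Finpartition (univ : Finset (Fin n × Fin m)) //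
      P.parts.card = k ∧ IsColouring (cliqueUnion n m) P} ≃ LED n m k) :=
    fun k => ⟨(Equiv.ofBijective ledToCol ⟨ledToCol_injective, ledToCol_surjective⟩).symm⟩
  refine ⟨fun k _ => hequiv k, ?_⟩
  haveI : Nonempty (Fin n × Fin m) := ⟨⟨⟨0, hn⟩, ⟨0, hm⟩⟩⟩
  have hbound : ∀ P : Finpartition (univ : Finset (Fin n × Fin m)),
      P.parts.card ∈ Finset.Icc 1 (n * m) := by
    intro P
    rw [Finset.mem_Icc]
    constructor
    · exact (P.parts_nonempty (by simp [Finset.univ_nonempty.ne_empty])).card_pos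
    · calc P.parts.card ≤ (univ : Finset (Fin n × Fin m)).card := P.card_parts_le_card
        _ = n * m := by simp [Finset.card_univ]
  rw [totalColourings, Nat.card_eq_fintype_card, ← Finset.card_univ,
    Finset.card_eq_sum_card_fiberwise (f := fun P => P.1.parts.card)
      (t := Finset.Icc 1 (n * m)) (fun P _ => hbound P.1)]
  refine Finset.sum_congr rfl fun k hk => ?_
  have e1 : {x : {P : Finpartition (univ : Finset (Fin n × Fin m)) //
      IsColouring (cliqueUnion n m) P} // x.1.parts.card = k} ≃
      {P : Finpartition (univ : Finset (Fin n × Fin m)) //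
        P.parts.card = k ∧ IsColouring (cliqueUnion n m) P} :=
    (Equiv.subtypeSubtypeEquivSubtypeInter (fun P : Finpartition (univ : Finset (Fin n × Fin m)) => IsColouring (cliqueUnion n m) P) (fun P => P.parts.card = k)).trans
      (Equiv.subtypeEquivRight fun P => and_comm)
  calc (Finset.univ.filter fun P : {P : Finpartition (univ : Finset (Fin n × Fin m)) //
          IsColouring (cliqueUnion n m) P} => P.1.parts.card = k).card
      = Fintype.card {x : {P : Finpartition (univ : Finset (Fin n × Fin m)) //
          IsColouring (cliqueUnion n m) P} // x.1.parts.card = k} :=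
        (Fintype.card_subtype _).symm
    _ = Nat.card (LED n m k) := by
        rw [← Nat.card_eq_fintype_card]
        exact (Nat.card_congr e1).trans (Nat.card_congr (hequiv k).some)
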